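/- Let K be a field of characteristic zero. If a : ℕ → K and b : ℕ → K are both P-recursive, then the sequence n ↦ a(n) + b(n) is P-recursive. -/

import Mathlib

/-- A sequence `a : ℕ → K` is P-recursive (holonomic) if there exist `d` and
polynomials `p 0, …, p d`, not all zero, with
`∑ i, p i (n) * a (n + i) = 0` for all `n`. -/
def IsPRecursive {K : Type*} [Field K] (a : ℕ → K) : Prop :=
  ∃ (d : ℕ) (p : Fin (d + 1) → Polynomial K),
    (∃ i, p i ≠ 0) ∧
    ∀ n : ℕ, ∑ i : Fin (d + 1), (p i).eval (n : K) * a (n + (i : ℕ)) = 0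

namespace PRecAux

open Polynomial Finset

attribute [local instance] Classical.propDecidable

variable {K : Type*} [Field K]

/-- Trimming: from a P-recursive witness, get a recurrence indexed by `ℕ` whose top
coefficient is nonzero and which vanishes above the top. -/
lemma trim_rec (a : ℕ → K) (d₀ : ℕ) (p₀ : Fin (d₀ + 1) → Polynomial K)
    (hne : ∃ i, p₀ i ≠ 0)
    (hrec : ∀ n : ℕ, ∑ i : Fin (d₀ + 1), (p₀ i).eval (n : K) * a (n + (i : ℕ)) = 0) :
    ∃ (d : ℕ) (p : ℕ → Polynomial K), p d ≠ 0 ∧ (∀ i, d < i → p i = 0) ∧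
      ∀ n : ℕ, ∑ i ∈ range (d + 1), (p i).eval (n : K) * a (n + i) = 0 := by
  obtain ⟨i₀, hi₀⟩ := hne
  set pN : ℕ → Polynomial K := fun i => if h : i < d₀ + 1 then p₀ ⟨i, h⟩ else 0 with hpN
  have hrecN : ∀ n : ℕ, ∑ i ∈ range (d₀ + 1), (pN i).eval (n : K) * a (n + i) = 0 := by
    intro n
    rw [← Fin.sum_univ_eq_sum_range (fun i => (pN i).eval (n : K) * a (n + i)) (d₀ + 1),
      ← hrec n]
    exact Finset.sum_congr rfl fun i _ => by simp [pN, i.is_le]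
  set S := (range (d₀ + 1)).filter (fun i => pN i ≠ 0) with hS
  have hSne : S.Nonempty := ⟨(i₀ : ℕ), by
    simp only [hS, mem_filter, mem_range]
    exact ⟨i₀.isLt, by simpa [pN, i₀.is_le] using hi₀⟩⟩
  set d := S.max' hSne with hd
  have hdS : d ∈ S := S.max'_mem hSne
  have hdlt : d < d₀ + 1 := (mem_range.mp (mem_filter.mp hdS).1)
  refine ⟨d, pN, (mem_filter.mp hdS).2, ?_, ?_⟩
  · intro i hi
    by_contra hzero
    by_cases h : i < d₀ + 1
    · exact absurd (S.le_max' i (mem_filter.mpr ⟨mem_range.mpr h, hzero⟩)) (by omega)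
    · exact hzero (by simp only [pN, dif_neg h])
  · intro n
    rw [← hrecN n]
    apply Finset.sum_subset
    · exact Finset.range_subset_range.mpr (by omega)
    · intro i hi1 hi2
      simp only [mem_range] at hi1 hi2
      by_contra hmem
      have : pN i ≠ 0 := fun h => hmem (by simp [h])
      exact absurd (S.le_max' i (mem_filter.mpr ⟨mem_range.mpr hi1, this⟩)) (by omega)

/-- The recurrence, shifted by `j` and padded with a guard, still vanishes. -/
lemma shift_rec (c : ℕ → K) (p : ℕ → Polynomial K) (d : ℕ)
    (hp : ∀ i, d < i → p i = 0)
    (hrec : ∀ n : ℕ, ∑ i ∈ range (d + 1), (p i).eval (n : K) * c (n + i) = 0)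
    (N j n : ℕ) (hj : j + d ≤ N) :
    ∑ k ∈ range (N + 1),
      (if j ≤ k then (p (k - j)).eval ((n : K) + (j : K)) else 0) * c (n + k) = 0 := by
  have h1 : ∑ k ∈ range (N + 1),
      (if j ≤ k then (p (k - j)).eval ((n : K) + (j : K)) else 0) * c (n + k)
      = ∑ k ∈ Ico j (N + 1), (p (k - j)).eval ((n : K) + (j : K)) * c (n + k) := by
    rw [range_eq_Ico, ← Finset.sum_Ico_consecutive _ (Nat.zero_le j) (by omega : j ≤ N + 1)]
    have h2 : ∑ k ∈ Ico 0 j,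
        (if j ≤ k then (p (k - j)).eval ((n : K) + (j : K)) else 0) * c (n + k) = 0 := by
      apply Finset.sum_eq_zero
      intro k hk
      rw [if_neg (by simp at hk; omega), zero_mul]
    rw [h2, zero_add]
    exact Finset.sum_congr rfl fun k hk => by
      rw [if_pos (by simp at hk; omega)]
  rw [h1, Finset.sum_Ico_eq_sum_range]
  have h4 : ∀ i : ℕ, j + i - j = i := fun i => by omega
  simp only [h4]
  have h3 : ∑ i ∈ range (N + 1 - j), (p i).eval ((n : K) + (j : K)) * c (n + (j + i))
      = ∑ i ∈ range (d + 1), (p i).eval ((n : K) + (j : K)) * c (n + (j + i)) := by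
    symm
    apply Finset.sum_subset (Finset.range_subset_range.mpr (by omega))
    intro i hi1 hi2
    simp only [mem_range] at hi1 hi2
    rw [hp i (by omega), eval_zero, zero_mul]
  rw [h3]
  have h5 := hrec (n + j)
  push_cast at h5
  simpa only [← add_assoc] using h5

/-- Matrix entries of right multiplication by the operator with coefficients `p`. -/
noncomputable def cmat (p : ℕ → Polynomial K) (j k : ℕ) : Polynomial K :=
  if j ≤ k then Polynomial.taylor (j : K) (p (k - j)) else 0

lemma cmat_eval (p : ℕ → Polynomial K) (j k n : ℕ) :
    (cmat p j k).eval (n : K) = if j ≤ k then (p (k - j)).eval ((n : K) + (j : K)) else 0 := by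
  unfold cmat
  split <;> simp [taylor_eval]

lemma mul_inj (p : ℕ → Polynomial K) (d m N : ℕ) (hpd : p d ≠ 0)
    (hp : ∀ i, d < i → p i = 0) (hN : m + d ≤ N) :
    Function.Injective ((Matrix.of fun (k : Fin (N + 1)) (j : Fin (m + 1)) =>
      algebraMap (Polynomial K) (RatFunc K) (cmat p (j : ℕ) (k : ℕ))).mulVecLin) := by
  rw [← LinearMap.ker_eq_bot, LinearMap.ker_eq_bot']
  intro α h0
  by_contra hne
  have : ∃ j, α j ≠ 0 := by
    by_contra h
    push_neg at h
    exact hne (funext h)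
  obtain ⟨j₁, hj₁⟩ := this
  set S := (Finset.univ : Finset (Fin (m + 1))).filter (fun j => α j ≠ 0) with hS
  have hSne : S.Nonempty := ⟨j₁, by simp [hS, hj₁]⟩
  set j₀ := S.max' hSne with hj₀
  have hj₀S : j₀ ∈ S := S.max'_mem hSne
  have hαj₀ : α j₀ ≠ 0 := (mem_filter.mp hj₀S).2
  have hmax : ∀ j, α j ≠ 0 → j ≤ j₀ := fun j hj => S.le_max' j (by simp [hS, hj])
  set k₀ : Fin (N + 1) := ⟨(j₀ : ℕ) + d, by have := j₀.isLt; omega⟩ with hk₀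
  have hcol := congrFun h0 k₀
  simp only [Matrix.mulVecLin_apply, Matrix.mulVec, dotProduct, Matrix.of_apply,
    Pi.zero_apply] at hcol
  rw [Finset.sum_eq_single j₀] at hcol
  · have h1 : cmat p (j₀ : ℕ) (k₀ : ℕ) = Polynomial.taylor ((j₀ : ℕ) : K) (p d) := by
      unfold cmat
      rw [if_pos (by simp [hk₀])]
      congr 1
      simp [hk₀]
    rw [h1] at hcol
    have h2 : Polynomial.taylor ((j₀ : ℕ) : K) (p d) ≠ 0 := fun h =>
      hpd (taylor_injective _ (by rw [h, map_zero]))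
    have h3 : algebraMap (Polynomial K) (RatFunc K) (Polynomial.taylor ((j₀ : ℕ) : K) (p d)) ≠ 0 :=
      fun h => h2 (RatFunc.algebraMap_injective K (by rw [h, map_zero]))
    exact mul_ne_zero h3 hαj₀ hcol
  · intro j _ hjne
    rcases lt_or_gt_of_ne hjne with hlt | hgt
    · have hle : (j : ℕ) ≤ (k₀ : ℕ) := by
        have : (j : ℕ) < (j₀ : ℕ) := hlt
        simp only [hk₀]
        omega
      have : cmat p (j : ℕ) (k₀ : ℕ) = 0 := by
        unfold cmat
        rw [if_pos hle, hp _ (by have : (j : ℕ) < (j₀ : ℕ) := hlt; simp only [hk₀]; omega),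
          map_zero]
      rw [this, map_zero, zero_mul]
    · have : α j = 0 := by
        by_contra h
        exact absurd (hmax j h) (not_le.mpr hgt)
      rw [this, mul_zero]
  · intro h
    exact absurd (Finset.mem_univ j₀) h

/-- Core construction: a common nonzero left multiple of two (trimmed) operators. -/
lemma main_core (d e : ℕ) (p q : ℕ → Polynomial K)
    (hinjp : Function.Injective ((Matrix.of fun (k : Fin (d + e + 1)) (j : Fin (e + 1)) =>
      algebraMap (Polynomial K) (RatFunc K) (cmat p (j : ℕ) (k : ℕ))).mulVecLin))
    (hinjq : Function.Injective ((Matrix.of fun (k : Fin (d + e + 1)) (j : Fin (d + 1)) =>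
      algebraMap (Polynomial K) (RatFunc K) (cmat q (j : ℕ) (k : ℕ))).mulVecLin)) :
    ∃ (v : Fin (d + e + 1) → Polynomial K) (A : Fin (e + 1) → Polynomial K)
      (B : Fin (d + 1) → Polynomial K),
      (∃ k, v k ≠ 0) ∧
      (∀ k : Fin (d + e + 1), v k = ∑ j : Fin (e + 1), A j * cmat p (j : ℕ) (k : ℕ)) ∧
      (∀ k : Fin (d + e + 1), v k = ∑ j : Fin (d + 1), B j * cmat q (j : ℕ) (k : ℕ)) := by
  set F := RatFunc K
  set φ := algebraMap (Polynomial K) F with hφ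
  set Tp := (Matrix.of fun (k : Fin (d + e + 1)) (j : Fin (e + 1)) =>
      φ (cmat p (j : ℕ) (k : ℕ))).mulVecLin with hTp
  set Tq := (Matrix.of fun (k : Fin (d + e + 1)) (j : Fin (d + 1)) =>
      φ (cmat q (j : ℕ) (k : ℕ))).mulVecLin with hTq
  set U := LinearMap.range Tp
  set W := LinearMap.range Tq
  have hU : Module.finrank F U = e + 1 := by
    rw [LinearMap.finrank_range_of_inj hinjp]
    rw [Module.finrank_fintype_fun_eq_card, Fintype.card_fin]
  have hW : Module.finrank F W = d + 1 := by
    rw [LinearMap.finrank_range_of_inj hinjq]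
    rw [Module.finrank_fintype_fun_eq_card, Fintype.card_fin]
  have hsup : Module.finrank F ↥(U ⊔ W) ≤ d + e + 1 := by
    refine le_trans (Submodule.finrank_le _) ?_
    simp [Module.finrank_fintype_fun_eq_card]
  have hkey := Submodule.finrank_sup_add_finrank_inf_eq U W
  have hne : U ⊓ W ≠ ⊥ := by
    intro h
    rw [h, finrank_bot] at hkey
    omega
  obtain ⟨u, humem, hu⟩ := (Submodule.ne_bot_iff _).mp hne
  obtain ⟨huU, huW⟩ := Submodule.mem_inf.mp humem
  obtain ⟨α, hα⟩ := huU
  obtain ⟨β, hβ⟩ := huW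
  obtain ⟨g, hg⟩ := IsLocalization.exist_integer_multiples
    (nonZeroDivisors (Polynomial K)) (Finset.univ : Finset (Fin (e + 1) ⊕ Fin (d + 1)))
    (Sum.elim α β)
  set A : Fin (e + 1) → Polynomial K :=
    fun j => (hg (Sum.inl j) (Finset.mem_univ _)).choose with hA
  set B : Fin (d + 1) → Polynomial K :=
    fun j => (hg (Sum.inr j) (Finset.mem_univ _)).choose with hB
  have hAs : ∀ j, φ (A j) = (g : Polynomial K) • α j :=
    fun j => (hg (Sum.inl j) (Finset.mem_univ _)).choose_spec
  have hBs : ∀ j, φ (B j) = (g : Polynomial K) • β j :=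
    fun j => (hg (Sum.inr j) (Finset.mem_univ _)).choose_spec
  set v : Fin (d + e + 1) → Polynomial K :=
    fun k => ∑ j : Fin (e + 1), A j * cmat p (j : ℕ) (k : ℕ) with hv
  set w : Fin (d + e + 1) → Polynomial K :=
    fun k => ∑ j : Fin (d + 1), B j * cmat q (j : ℕ) (k : ℕ) with hw
  have hφv : ∀ k, φ (v k) = φ (g : Polynomial K) * u k := by
    intro k
    rw [hv]
    simp only [map_sum, map_mul]
    have : ∀ j : Fin (e + 1), φ (A j) * φ (cmat p (j : ℕ) (k : ℕ))
        = φ (g : Polynomial K) * (φ (cmat p (j : ℕ) (k : ℕ)) * α j) := by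
      intro j
      rw [hAs j, Algebra.smul_def]
      ring
    rw [Finset.sum_congr rfl (fun j _ => this j), ← Finset.mul_sum]
    congr 1
    rw [← hα]
    simp [hTp, Matrix.mulVecLin_apply, Matrix.mulVec, dotProduct]
  have hφw : ∀ k, φ (w k) = φ (g : Polynomial K) * u k := by
    intro k
    rw [hw]
    simp only [map_sum, map_mul]
    have : ∀ j : Fin (d + 1), φ (B j) * φ (cmat q (j : ℕ) (k : ℕ))
        = φ (g : Polynomial K) * (φ (cmat q (j : ℕ) (k : ℕ)) * β j) := by
      intro j
      rw [hBs j, Algebra.smul_def]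
      ring
    rw [Finset.sum_congr rfl (fun j _ => this j), ← Finset.mul_sum]
    congr 1
    rw [← hβ]
    simp [hTq, Matrix.mulVecLin_apply, Matrix.mulVec, dotProduct]
  have hvw : ∀ k, v k = w k := by
    intro k
    apply RatFunc.algebraMap_injective K
    rw [hφv k, hφw k]
  have hgne : φ (g : Polynomial K) ≠ 0 := by
    have : (g : Polynomial K) ≠ 0 := nonZeroDivisors.ne_zero g.2
    intro h
    exact this (RatFunc.algebraMap_injective K (by rw [h, map_zero]))
  have hvne : ∃ k, v k ≠ 0 := by
    have : ∃ k, u k ≠ 0 := by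
      by_contra h
      push_neg at h
      exact hu (funext h)
    obtain ⟨k, hk⟩ := this
    refine ⟨k, fun h => ?_⟩
    have := hφv k
    rw [h, map_zero] at this
    exact hk ((mul_eq_zero.mp this.symm).resolve_left hgne)
  exact ⟨v, A, B, hvne, fun k => rfl, fun k => hvw k⟩

end PRecAux

theorem stmt5 {K : Type*} [Field K] [CharZero K] (a b : ℕ → K)
    (ha : IsPRecursive a) (hb : IsPRecursive b) :
    IsPRecursive (fun n => a n + b n) := by
  classical
  open Polynomial Finset PRecAux in
  obtain ⟨d₀, p₀, hne₀, hrec₀⟩ := ha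
  obtain ⟨e₀, q₀, hne₁, hrec₁⟩ := hb
  obtain ⟨d, p, hpd, hp, hpa⟩ := PRecAux.trim_rec a d₀ p₀ hne₀ hrec₀
  obtain ⟨e, q, hqe, hq, hqb⟩ := PRecAux.trim_rec b e₀ q₀ hne₁ hrec₁
  obtain ⟨v, A, B, ⟨k₀, hk₀⟩, hvA, hvB⟩ :=
    PRecAux.main_core d e p q
      (PRecAux.mul_inj p d e (d + e) hpd hp (by omega))
      (PRecAux.mul_inj q e d (d + e) hqe hq (by omega))
  refine ⟨d + e, v, ⟨k₀, hk₀⟩, ?_⟩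
  intro n
  have inner_a : ∀ j : ℕ, j ≤ e →
      ∑ k : Fin (d + e + 1), (PRecAux.cmat p j (k : ℕ)).eval (n : K) * a (n + (k : ℕ)) = 0 := by
    intro j hj
    rw [Fin.sum_univ_eq_sum_range
      (fun k => (PRecAux.cmat p j k).eval (n : K) * a (n + k)) (d + e + 1)]
    simp only [PRecAux.cmat_eval]
    exact PRecAux.shift_rec a p d hp hpa (d + e) j n (by omega)
  have inner_b : ∀ j : ℕ, j ≤ d →
      ∑ k : Fin (d + e + 1), (PRecAux.cmat q j (k : ℕ)).eval (n : K) * b (n + (k : ℕ)) = 0 := by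
    intro j hj
    rw [Fin.sum_univ_eq_sum_range
      (fun k => (PRecAux.cmat q j k).eval (n : K) * b (n + k)) (d + e + 1)]
    simp only [PRecAux.cmat_eval]
    exact PRecAux.shift_rec b q e hq hqb (d + e) j n (by omega)
  have parta : ∑ k : Fin (d + e + 1), (v k).eval (n : K) * a (n + (k : ℕ)) = 0 := by
    have h1 : ∀ k : Fin (d + e + 1), (v k).eval (n : K) * a (n + (k : ℕ))
        = ∑ j : Fin (e + 1), (A j).eval (n : K) *
            ((PRecAux.cmat p (j : ℕ) (k : ℕ)).eval (n : K) * a (n + (k : ℕ))) := by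
      intro k
      rw [hvA k, Polynomial.eval_finset_sum, Finset.sum_mul]
      exact Finset.sum_congr rfl fun j _ => by rw [Polynomial.eval_mul]; ring
    rw [Finset.sum_congr rfl (fun k _ => h1 k), Finset.sum_comm]
    apply Finset.sum_eq_zero
    intro j _
    rw [← Finset.mul_sum, inner_a (j : ℕ) (by have := j.isLt; omega), mul_zero]
  have partb : ∑ k : Fin (d + e + 1), (v k).eval (n : K) * b (n + (k : ℕ)) = 0 := by
    have h1 : ∀ k : Fin (d + e + 1), (v k).eval (n : K) * b (n + (k : ℕ))
        = ∑ j : Fin (d + 1), (B j).eval (n : K) *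
            ((PRecAux.cmat q (j : ℕ) (k : ℕ)).eval (n : K) * b (n + (k : ℕ))) := by
      intro k
      rw [hvB k, Polynomial.eval_finset_sum, Finset.sum_mul]
      exact Finset.sum_congr rfl fun j _ => by rw [Polynomial.eval_mul]; ring
    rw [Finset.sum_congr rfl (fun k _ => h1 k), Finset.sum_comm]
    apply Finset.sum_eq_zero
    intro j _
    rw [← Finset.mul_sum, inner_b (j : ℕ) (by have := j.isLt; omega), mul_zero]
  simp only [mul_add]
  rw [Finset.sum_add_distrib, parta, partb, add_zero]
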